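/- The function u(x) = sinh_{v,w}(x) satisfies the initial value problem (|u'|^{v-2} u')' - ((v-1)w/v)·|u|^{w-2}·u = 0 with u(0)=0, u'(0)=1, on a neighborhood of 0, for v > 1 and w > 1. -/

import Mathlib

open MeasureTheory Set

/-- `s` is the generalized hyperbolic sine `sinh_{v,w}` on the open set `D`
(the inverse of `arsinh_{v,w}(y) = ∫₀^y (1+|t|^w)^(-1/v) dt`) and
`c = sinh_{v,w}' = cosh_{v,w}`. -/
def IsGenSinh (v w : ℝ) (D : Set ℝ) (s c : ℝ → ℝ) : Prop :=
  IsOpen D ∧ (∀ x ∈ D, (∫ t in (0:ℝ)..(s x), (1 + |t| ^ w) ^ (-1 / v)) = x) ∧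
    (∀ x ∈ D, HasDerivAt s (c x) x)

/-- For `v > 1` and `w > 1`, `u = sinh_{v,w}` solves the initial value problem
`(|u'|^(v-2) u')' - ((v-1)w/v)·|u|^(w-2)·u = 0`, `u(0) = 0`, `u'(0) = 1`,
on a neighborhood of `0`. -/
theorem stmt6 (v w : ℝ) (hv : 1 < v) (hw : 1 < w)
    (D : Set ℝ) (s c : ℝ → ℝ) (h : IsGenSinh v w D s c) (h0 : 0 ∈ D) :
    s 0 = 0 ∧ c 0 = 1 ∧ ∃ ε > (0:ℝ), ∀ x : ℝ, |x| < ε →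
      deriv (fun t => |c t| ^ (v - 2) * c t) x
        - (v - 1) * w / v * (|s x| ^ (w - 2) * s x) = 0 := by
  obtain ⟨hD, hint, hder⟩ := h
  have hv0 : (0:ℝ) < v := lt_trans one_pos hv
  set f : ℝ → ℝ := fun t => (1 + |t| ^ w) ^ (-1 / v) with hf
  have hbasepos : ∀ t : ℝ, (0:ℝ) < 1 + |t| ^ w := fun t =>
    add_pos_of_pos_of_nonneg one_pos (Real.rpow_nonneg (abs_nonneg t) w)
  have hfc : Continuous f := by
    apply (continuous_const.add (continuous_abs.rpow_const fun t => Or.inr (zero_le_one.trans hw.le))).rpow_const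
    exact fun t => Or.inl (hbasepos t).ne'
  have hfpos : ∀ t, 0 < f t := fun t => Real.rpow_pos_of_pos (hbasepos t) _
  set F : ℝ → ℝ := fun y => ∫ t in (0:ℝ)..y, f t with hF
  have hFd : ∀ y : ℝ, HasDerivAt F (f y) y := fun y =>
    (hfc.integral_hasStrictDerivAt 0 y).hasDerivAt
  have hFmono : StrictMono F := by
    apply strictMono_of_deriv_pos
    intro y
    rw [(hFd y).deriv]
    exact hfpos y
  -- s 0 = 0
  have hs0 : s 0 = 0 := by
    have h1 : F (s 0) = 0 := hint 0 h0
    have h2 : F 0 = 0 := intervalIntegral.integral_same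
    exact hFmono.injective (h1.trans h2.symm)
  -- c x formula
  have hc : ∀ x ∈ D, c x = (1 + |s x| ^ w) ^ (1 / v) := by
    intro x hx
    have hchain : HasDerivAt (fun t => F (s t)) (f (s x) * c x) x :=
      (hFd (s x)).comp x (hder x hx)
    have hid : HasDerivAt (fun t => F (s t)) 1 x := by
      have heq : (fun t => F (s t)) =ᶠ[nhds x] id :=
        Filter.eventuallyEq_of_mem (hD.mem_nhds hx) (fun t ht => hint t ht)
      exact (hasDerivAt_id x).congr_of_eventuallyEq heq
    have huni : f (s x) * c x = 1 := hchain.unique hid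
    have hpow : (1 + |s x| ^ w) ^ (1 / v) * f (s x) = 1 := by
      rw [hf, ← Real.rpow_add (hbasepos (s x)),
        show 1 / v + -1 / v = (0:ℝ) by ring, Real.rpow_zero]
    calc c x = (1 + |s x| ^ w) ^ (1 / v) * (f (s x) * c x) := by
              rw [← mul_assoc, hpow, one_mul]
      _ = (1 + |s x| ^ w) ^ (1 / v) := by rw [huni, mul_one]
  have hc0 : c 0 = 1 := by
    rw [hc 0 h0, hs0, abs_zero, Real.zero_rpow (ne_of_gt (by linarith : (0:ℝ) < w))]
    norm_num
  refine ⟨hs0, hc0, ?_⟩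
  obtain ⟨ε, hε, hball⟩ := Metric.isOpen_iff.mp hD 0 h0
  refine ⟨ε, hε, fun x hx => ?_⟩
  have hxD : x ∈ D := hball (by simpa [Real.dist_eq] using hx)
  have hmemD : ∀ t ∈ Metric.ball (0:ℝ) ε, t ∈ D := fun t ht => hball ht
  -- on the ball, |c t|^(v-2) * c t = (1+|s t|^w)^((v-1)/v)
  have hge : (fun t => |c t| ^ (v - 2) * c t) =ᶠ[nhds x]
      (fun t => (1 + |s t| ^ w) ^ ((v - 1) / v)) := by
    apply Filter.eventuallyEq_of_mem (hD.mem_nhds hxD)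
    intro t ht
    have hct : c t = (1 + |s t| ^ w) ^ (1 / v) := hc t ht
    have hctpos : 0 < c t := hct ▸ Real.rpow_pos_of_pos (hbasepos (s t)) _
    simp only
    rw [abs_of_pos hctpos, ← Real.rpow_add_one hctpos.ne', hct,
      ← Real.rpow_mul (hbasepos (s t)).le]
    congr 1
    field_simp
    ring
  rw [hge.deriv_eq]
  have hst : HasDerivAt s (c x) x := hder x hxD
  have habs : HasDerivAt (fun y : ℝ => |y| ^ w) (w * |s x| ^ (w - 2) * s x) (s x) :=
    hasDerivAt_abs_rpow (s x) hw
  have hinner : HasDerivAt (fun t => 1 + |s t| ^ w) (w * |s x| ^ (w - 2) * s x * c x) x :=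
    (habs.comp x hst).const_add 1
  have houter : HasDerivAt (fun u : ℝ => u ^ ((v - 1) / v))
      ((v - 1) / v * (1 + |s x| ^ w) ^ ((v - 1) / v - 1)) (1 + |s x| ^ w) :=
    Real.hasDerivAt_rpow_const (Or.inl (hbasepos (s x)).ne')
  have htotal : HasDerivAt (fun t => (1 + |s t| ^ w) ^ ((v - 1) / v))
      ((v - 1) / v * (1 + |s x| ^ w) ^ ((v - 1) / v - 1) *
        (w * |s x| ^ (w - 2) * s x * c x)) x := by have := houter.comp x hinner; exact this
  rw [htotal.deriv]
  have hcx : c x = (1 + |s x| ^ w) ^ (1 / v) := hc x hxD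
  have key : (1 + |s x| ^ w) ^ ((v - 1) / v - 1) * c x = 1 := by
    rw [hcx, ← Real.rpow_add (hbasepos (s x)),
      show (v - 1) / v - 1 + 1 / v = 0 by field_simp; ring, Real.rpow_zero]
  have hring : (v - 1) / v * (1 + |s x| ^ w) ^ ((v - 1) / v - 1) *
      (w * |s x| ^ (w - 2) * s x * c x)
      = (v - 1) * w / v * (|s x| ^ (w - 2) * s x) *
        ((1 + |s x| ^ w) ^ ((v - 1) / v - 1) * c x) := by ring
  rw [hring, key, mul_one, sub_self]
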